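/- Let n ≥ 2 and let g_1,…,g_{n+1} be real constants. Define Q : ℝ^n × ℝ^n → ℝ by Q(x,z) = exp( g_1 e^{x_1 + z_1} + Σ_{i=1}^{n−1} ( e^{x_i − z_i} + g_{i+1} e^{z_{i+1} − x_i} ) + e^{x_n − z_n} + g_{n+1} e^{−x_n − z_n} ). Then for all x, z ∈ ℝ^n: −(1/2) Σ_{i=1}^{n} ∂²Q/∂x_i² + [ 2 g_1 e^{2 x_1} + Σ_{i=1}^{n−1} g_{i+1} e^{x_{i+1} − x_i} + g_n g_{n+1} e^{−x_n − x_{n−1}} ] Q = −(1/2) Σ_{i=1}^{n} ∂²Q/∂z_i² + [ g_1 g_2 e^{z_1 + z_2} + Σ_{i=1}^{n−1} g_{i+1} e^{z_{i+1} − z_i} + 2 g_{n+1} e^{−2 z_n} ] Q. That is, Q intertwines two quadratic Hamiltonians of the twisted affine A^{(2)}_{2n−1} closed Toda chain with different coupling constants. -/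

import Mathlib

open Real

/-- Second partial derivative of `f` in the `i`-th coordinate at `x`. -/
noncomputable def pd2 {k : ℕ} (f : (Fin k → ℝ) → ℝ) (i : Fin k) (x : Fin k → ℝ) : ℝ :=
  deriv (deriv (fun t : ℝ => f (Function.update x i t))) (x i)

/-- The elementary kernel intertwining two `A^{(2)}_{2n−1}` closed Toda chain
Hamiltonians with different couplings (`n = m + 2 ≥ 2`):
`Q(x,z) = exp( g_1 e^{x_1+z_1} + Σ_{i=1}^{n−1} ( e^{x_i − z_i} + g_{i+1} e^{z_{i+1} − x_i} ) + e^{x_n − z_n} + g_{n+1} e^{−x_n − z_n} )`. -/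
noncomputable def Qker (m : ℕ) (g : Fin (m + 3) → ℝ)
    (x z : Fin (m + 2) → ℝ) : ℝ :=
  Real.exp (g 0 * Real.exp (x 0 + z 0)
    + (∑ i : Fin (m + 1), (Real.exp (x i.castSucc - z i.castSucc)
        + g i.succ.castSucc * Real.exp (z i.succ - x i.castSucc)))
    + Real.exp (x (Fin.last (m + 1)) - z (Fin.last (m + 1)))
    + g (Fin.last (m + 2)) * Real.exp (-x (Fin.last (m + 1)) - z (Fin.last (m + 1))))

section Aux

lemma hasDerivAt_exp_aff (a b c t : ℝ) :
    HasDerivAt (fun s : ℝ => Real.exp (a * Real.exp s + b * Real.exp (-s) + c))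
      (Real.exp (a * Real.exp t + b * Real.exp (-t) + c) * (a * Real.exp t - b * Real.exp (-t))) t := by
  have h1 : HasDerivAt (fun s : ℝ => a * Real.exp s + b * Real.exp (-s) + c)
      (a * Real.exp t - b * Real.exp (-t)) t := by
    have := ((Real.hasDerivAt_exp t).const_mul a).add
      ((((hasDerivAt_id t).neg.exp).const_mul b))
    simpa [mul_comm, sub_eq_add_neg, mul_neg] using this.add_const c
  simpa using h1.exp

lemma deriv2_exp_aff (a b c : ℝ) (t : ℝ) :
    deriv (deriv (fun s : ℝ => Real.exp (a * Real.exp s + b * Real.exp (-s) + c))) t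
    = Real.exp (a * Real.exp t + b * Real.exp (-t) + c) *
      ((a * Real.exp t - b * Real.exp (-t))^2 + (a * Real.exp t + b * Real.exp (-t))) := by
  have hd : deriv (fun s : ℝ => Real.exp (a * Real.exp s + b * Real.exp (-s) + c))
      = fun s => Real.exp (a * Real.exp s + b * Real.exp (-s) + c) * (a * Real.exp s - b * Real.exp (-s)) := by
    funext s; exact (hasDerivAt_exp_aff a b c s).deriv
  rw [hd]
  have h2 : HasDerivAt (fun s : ℝ => Real.exp (a * Real.exp s + b * Real.exp (-s) + c) * (a * Real.exp s - b * Real.exp (-s)))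
      (Real.exp (a * Real.exp t + b * Real.exp (-t) + c) * (a * Real.exp t - b * Real.exp (-t)) * (a * Real.exp t - b * Real.exp (-t))
        + Real.exp (a * Real.exp t + b * Real.exp (-t) + c) * (a * Real.exp t + b * Real.exp (-t))) t := by
    have hb : HasDerivAt (fun s : ℝ => a * Real.exp s - b * Real.exp (-s))
        (a * Real.exp t + b * Real.exp (-t)) t := by
      have := ((Real.hasDerivAt_exp t).const_mul a).sub ((((hasDerivAt_id t).neg.exp).const_mul b))
      simpa [mul_comm, mul_neg, sub_neg_eq_add, Pi.sub_def] using this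
    simpa [Pi.mul_def] using (hasDerivAt_exp_aff a b c t).mul hb
  rw [h2.deriv]; ring

lemma update_sum {k : ℕ} (a b : Fin k → ℝ) (i : Fin k) (x : Fin k → ℝ) (t : ℝ) :
    (∑ j, (a j * Real.exp (Function.update x i t j) + b j * Real.exp (-(Function.update x i t j))))
    = a i * Real.exp t + b i * Real.exp (-t)
      + ∑ j ∈ Finset.univ \ {i}, (a j * Real.exp (x j) + b j * Real.exp (-(x j))) := by
  have h : ∀ j, (a j * Real.exp (Function.update x i t j) + b j * Real.exp (-(Function.update x i t j)))
      = Function.update (fun j => a j * Real.exp (x j) + b j * Real.exp (-(x j))) i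
          (a i * Real.exp t + b i * Real.exp (-t)) j := by
    intro j
    rcases eq_or_ne j i with rfl | h
    · simp
    · simp [Function.update_of_ne h]
  rw [Finset.sum_congr rfl (fun j _ => h j), Finset.sum_update_of_mem (Finset.mem_univ i)]

lemma pd2_exp_sum {k : ℕ} (a b : Fin k → ℝ) (i : Fin k) (x : Fin k → ℝ) :
    pd2 (fun u => Real.exp (∑ j, (a j * Real.exp (u j) + b j * Real.exp (-(u j))))) i x
    = Real.exp (∑ j, (a j * Real.exp (x j) + b j * Real.exp (-(x j)))) *
      ((a i * Real.exp (x i) - b i * Real.exp (-(x i)))^2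
        + (a i * Real.exp (x i) + b i * Real.exp (-(x i)))) := by
  unfold pd2
  have hfun : (fun t : ℝ => Real.exp (∑ j, (a j * Real.exp (Function.update x i t j)
      + b j * Real.exp (-(Function.update x i t j)))))
      = fun t : ℝ => Real.exp (a i * Real.exp t + b i * Real.exp (-t)
        + ∑ j ∈ Finset.univ \ {i}, (a j * Real.exp (x j) + b j * Real.exp (-(x j)))) := by
    funext t; rw [update_sum]
  rw [hfun, deriv2_exp_aff]
  have hsum : (∑ j, (a j * Real.exp (x j) + b j * Real.exp (-(x j))))
      = a i * Real.exp (x i) + b i * Real.exp (-(x i))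
        + ∑ j ∈ Finset.univ \ {i}, (a j * Real.exp (x j) + b j * Real.exp (-(x j))) := by
    simp [update_sum a b i x (x i)]
  rw [hsum]

noncomputable def Pc (m : ℕ) (g : Fin (m+3) → ℝ) (z : Fin (m+2) → ℝ) (i : Fin (m+2)) : ℝ :=
  Real.exp (-(z i)) + (if i = 0 then g 0 * Real.exp (z 0) else 0)

noncomputable def Mc (m : ℕ) (g : Fin (m+3) → ℝ) (z : Fin (m+2) → ℝ) : Fin (m+2) → ℝ :=
  Fin.lastCases (g (Fin.last (m+2)) * Real.exp (-(z (Fin.last (m+1)))))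
    (fun j : Fin (m+1) => g j.succ.castSucc * Real.exp (z j.succ))

noncomputable def Pd (m : ℕ) (g : Fin (m+3) → ℝ) (x : Fin (m+2) → ℝ) : Fin (m+2) → ℝ :=
  Fin.cases (g 0 * Real.exp (x 0))
    (fun j : Fin (m+1) => g j.succ.castSucc * Real.exp (-(x j.castSucc)))

noncomputable def Md (m : ℕ) (g : Fin (m+3) → ℝ) (x : Fin (m+2) → ℝ) (i : Fin (m+2)) : ℝ :=
  Real.exp (x i) + (if i = Fin.last (m+1) then g (Fin.last (m+2)) * Real.exp (-(x (Fin.last (m+1)))) else 0)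

noncomputable def Sx (m : ℕ) (g : Fin (m+3) → ℝ) (x z : Fin (m+2) → ℝ) : ℝ :=
  g 0 * Real.exp (x 0 + z 0)
    + (∑ i : Fin (m + 1), (Real.exp (x i.castSucc - z i.castSucc)
        + g i.succ.castSucc * Real.exp (z i.succ - x i.castSucc)))
    + Real.exp (x (Fin.last (m + 1)) - z (Fin.last (m + 1)))
    + g (Fin.last (m + 2)) * Real.exp (-x (Fin.last (m + 1)) - z (Fin.last (m + 1)))

lemma Sx_eq_x (m : ℕ) (g : Fin (m+3) → ℝ) (u z : Fin (m+2) → ℝ) :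
    Sx m g u z = ∑ j, (Pc m g z j * Real.exp (u j) + Mc m g z j * Real.exp (-(u j))) := by
  rw [Finset.sum_add_distrib]
  have h1 : ∑ j, Pc m g z j * Real.exp (u j)
      = (∑ j, Real.exp (-(z j)) * Real.exp (u j)) + g 0 * Real.exp (z 0) * Real.exp (u 0) := by
    simp only [Pc, add_mul, ite_mul, zero_mul]
    rw [Finset.sum_add_distrib, Finset.sum_ite_eq' Finset.univ (0 : Fin (m+2))]
    simp
  have h2 : ∑ j, Mc m g z j * Real.exp (-(u j))
      = (∑ i : Fin (m+1), g i.succ.castSucc * Real.exp (z i.succ) * Real.exp (-(u i.castSucc)))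
        + g (Fin.last (m+2)) * Real.exp (-(z (Fin.last (m+1)))) * Real.exp (-(u (Fin.last (m+1)))) := by
    rw [Fin.sum_univ_castSucc]
    simp [Mc]
  rw [h1, h2, Fin.sum_univ_castSucc (f := fun j => Real.exp (-(z j)) * Real.exp (u j))]
  unfold Sx
  rw [Finset.sum_add_distrib]
  have e1 : ∑ i : Fin (m+1), Real.exp (u i.castSucc - z i.castSucc)
      = ∑ i : Fin (m+1), Real.exp (-(z i.castSucc)) * Real.exp (u i.castSucc) := by
    refine Finset.sum_congr rfl (fun i _ => ?_)
    rw [Real.exp_sub, Real.exp_neg]; ring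
  have e2 : ∑ i : Fin (m+1), g i.succ.castSucc * Real.exp (z i.succ - u i.castSucc)
      = ∑ i : Fin (m+1), g i.succ.castSucc * Real.exp (z i.succ) * Real.exp (-(u i.castSucc)) := by
    refine Finset.sum_congr rfl (fun i _ => ?_)
    rw [Real.exp_sub, Real.exp_neg]; ring
  rw [e1, e2]
  simp only [Real.exp_add, Real.exp_sub, Real.exp_neg, neg_sub, sub_neg_eq_add]
  ring

lemma Sx_eq_z (m : ℕ) (g : Fin (m+3) → ℝ) (x v : Fin (m+2) → ℝ) :
    Sx m g x v = ∑ j, (Pd m g x j * Real.exp (v j) + Md m g x j * Real.exp (-(v j))) := by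
  rw [Finset.sum_add_distrib]
  have h1 : ∑ j, Pd m g x j * Real.exp (v j)
      = g 0 * Real.exp (x 0) * Real.exp (v 0)
        + ∑ j : Fin (m+1), g j.succ.castSucc * Real.exp (-(x j.castSucc)) * Real.exp (v j.succ) := by
    rw [Fin.sum_univ_succ]
    simp [Pd]
  have h2 : ∑ j, Md m g x j * Real.exp (-(v j))
      = (∑ j, Real.exp (x j) * Real.exp (-(v j)))
        + g (Fin.last (m+2)) * Real.exp (-(x (Fin.last (m+1)))) * Real.exp (-(v (Fin.last (m+1)))) := by
    simp only [Md, add_mul, ite_mul, zero_mul]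
    rw [Finset.sum_add_distrib, Finset.sum_ite_eq' Finset.univ (Fin.last (m+1))]
    simp [mul_assoc]
  rw [h1, h2, Fin.sum_univ_castSucc (f := fun j => Real.exp (x j) * Real.exp (-(v j)))]
  unfold Sx
  rw [Finset.sum_add_distrib]
  have e1 : ∑ i : Fin (m+1), Real.exp (x i.castSucc - v i.castSucc)
      = ∑ i : Fin (m+1), Real.exp (x i.castSucc) * Real.exp (-(v i.castSucc)) := by
    refine Finset.sum_congr rfl (fun i _ => ?_)
    rw [Real.exp_sub, Real.exp_neg]; ring
  have e2 : ∑ i : Fin (m+1), g i.succ.castSucc * Real.exp (v i.succ - x i.castSucc)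
      = ∑ i : Fin (m+1), g i.succ.castSucc * Real.exp (-(x i.castSucc)) * Real.exp (v i.succ) := by
    refine Finset.sum_congr rfl (fun i _ => ?_)
    rw [Real.exp_sub, Real.exp_neg]; ring
  rw [e1, e2]
  simp only [Real.exp_add, Real.exp_sub, Real.exp_neg, neg_sub, sub_neg_eq_add]
  ring

lemma crossX (m : ℕ) (g : Fin (m+3) → ℝ) (x z : Fin (m+2) → ℝ) :
    ∑ j, (Pc m g z j * Real.exp (x j)) * (Mc m g z j * Real.exp (-(x j)))
    = g 0 * g 1 * Real.exp (z 0 + z 1)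
      + (∑ i : Fin (m + 1), g i.succ.castSucc * Real.exp (z i.succ - z i.castSucc))
      + g (Fin.last (m+2)) * Real.exp (-(2 * z (Fin.last (m+1)))) := by
  have step1 : ∀ j : Fin (m+2), (Pc m g z j * Real.exp (x j)) * (Mc m g z j * Real.exp (-(x j)))
      = Pc m g z j * Mc m g z j := by
    intro j
    have h : Real.exp (x j) * Real.exp (-(x j)) = 1 := by rw [← Real.exp_add]; simp
    linear_combination (Pc m g z j * Mc m g z j) * h
  rw [Finset.sum_congr rfl (fun j _ => step1 j)]
  have step2 : ∑ j, Pc m g z j * Mc m g z j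
      = (∑ j, Real.exp (-(z j)) * Mc m g z j) + g 0 * Real.exp (z 0) * Mc m g z 0 := by
    simp only [Pc, add_mul, ite_mul, zero_mul]
    rw [Finset.sum_add_distrib, Finset.sum_ite_eq' Finset.univ (0 : Fin (m+2))]
    simp
  rw [step2, Fin.sum_univ_castSucc (f := fun j => Real.exp (-(z j)) * Mc m g z j)]
  have hMc0 : Mc m g z 0 = g 1 * Real.exp (z 1) := by
    show Mc m g z (Fin.castSucc 0) = _
    simp only [Mc, Fin.lastCases_castSucc]
    simp
  rw [hMc0]
  have hmid : ∑ i : Fin (m+1), Real.exp (-(z i.castSucc)) * Mc m g z i.castSucc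
      = ∑ i : Fin (m + 1), g i.succ.castSucc * Real.exp (z i.succ - z i.castSucc) := by
    refine Finset.sum_congr rfl (fun i _ => ?_)
    simp only [Mc, Fin.lastCases_castSucc]
    rw [Real.exp_sub, Real.exp_neg]; ring
  rw [hmid]
  simp only [Mc, Fin.lastCases_last]
  have h1 : Real.exp (-(z (Fin.last (m+1)))) * Real.exp (-(z (Fin.last (m+1))))
      = Real.exp (-(2 * z (Fin.last (m+1)))) := by
    rw [← Real.exp_add]; ring_nf
  have h2 : Real.exp (z 0) * Real.exp (z 1) = Real.exp (z 0 + z 1) := by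
    rw [← Real.exp_add]
  linear_combination g (Fin.last (m+2)) * h1 + g 0 * g 1 * h2

lemma crossZ (m : ℕ) (g : Fin (m+3) → ℝ) (x z : Fin (m+2) → ℝ) :
    ∑ j, (Pd m g x j * Real.exp (z j)) * (Md m g x j * Real.exp (-(z j)))
    = g 0 * Real.exp (2 * x 0)
      + (∑ i : Fin (m + 1), g i.succ.castSucc * Real.exp (x i.succ - x i.castSucc))
      + g (Fin.last (m + 1)).castSucc * g (Fin.last (m + 2))
          * Real.exp (-x (Fin.last (m + 1)) - x (Fin.last m).castSucc) := by
  have step1 : ∀ j : Fin (m+2), (Pd m g x j * Real.exp (z j)) * (Md m g x j * Real.exp (-(z j)))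
      = Pd m g x j * Md m g x j := by
    intro j
    have h : Real.exp (z j) * Real.exp (-(z j)) = 1 := by rw [← Real.exp_add]; simp
    linear_combination (Pd m g x j * Md m g x j) * h
  rw [Finset.sum_congr rfl (fun j _ => step1 j)]
  have step2 : ∑ j, Pd m g x j * Md m g x j
      = (∑ j, Pd m g x j * Real.exp (x j))
        + Pd m g x (Fin.last (m+1)) * (g (Fin.last (m+2)) * Real.exp (-(x (Fin.last (m+1))))) := by
    simp only [Md, mul_add, mul_ite, mul_zero]
    rw [Finset.sum_add_distrib, Finset.sum_ite_eq' Finset.univ (Fin.last (m+1))]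
    simp
  rw [step2, Fin.sum_univ_succ (f := fun j => Pd m g x j * Real.exp (x j))]
  have hPd0 : Pd m g x 0 = g 0 * Real.exp (x 0) := by simp [Pd]
  have hPdL : Pd m g x (Fin.last (m+1))
      = g (Fin.last (m+1)).castSucc * Real.exp (-(x (Fin.last m).castSucc)) := by
    rw [show Fin.last (m+1) = (Fin.last m).succ from (Fin.succ_last m).symm]
    simp only [Pd, Fin.cases_succ]
  have hmid : ∑ i : Fin (m+1), Pd m g x i.succ * Real.exp (x i.succ)
      = ∑ i : Fin (m + 1), g i.succ.castSucc * Real.exp (x i.succ - x i.castSucc) := by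
    refine Finset.sum_congr rfl (fun i _ => ?_)
    simp only [Pd, Fin.cases_succ]
    rw [Real.exp_sub, Real.exp_neg]; ring
  rw [hmid, hPd0, hPdL]
  have h1 : Real.exp (x 0) * Real.exp (x 0) = Real.exp (2 * x 0) := by
    rw [← Real.exp_add]; ring_nf
  have h2 : Real.exp (-(x (Fin.last m).castSucc)) * Real.exp (-(x (Fin.last (m+1))))
      = Real.exp (-x (Fin.last (m + 1)) - x (Fin.last m).castSucc) := by
    rw [← Real.exp_add]; ring_nf
  linear_combination g 0 * h1
    + g (Fin.last (m+1)).castSucc * g (Fin.last (m+2)) * h2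

lemma sqPc (m : ℕ) (g : Fin (m+3) → ℝ) (x z : Fin (m+2) → ℝ) :
    ∑ j, (Pc m g z j * Real.exp (x j))^2
    = (∑ j, (Real.exp (-(z j)) * Real.exp (x j))^2)
      + (2 * g 0 * Real.exp (2 * x 0) + (g 0 * Real.exp (x 0) * Real.exp (z 0))^2) := by
  have step : ∀ j : Fin (m+2), (Pc m g z j * Real.exp (x j))^2
      = (Real.exp (-(z j)) * Real.exp (x j))^2
        + (if j = 0 then 2 * g 0 * Real.exp (2 * x 0) + (g 0 * Real.exp (x 0) * Real.exp (z 0))^2 else 0) := by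
    intro j
    rcases eq_or_ne j 0 with rfl | h
    · simp only [Pc, if_pos rfl, ite_true]
      have h1 : Real.exp (z 0) * Real.exp (-(z 0)) = 1 := by rw [← Real.exp_add]; simp
      have h2 : Real.exp (x 0) * Real.exp (x 0) = Real.exp (2 * x 0) := by
        rw [← Real.exp_add]; ring_nf
      linear_combination (2 * g 0 * Real.exp (x 0) * Real.exp (x 0)) * h1
        + 2 * g 0 * h2
    · simp [Pc, h]
  rw [Finset.sum_congr rfl (fun j _ => step j), Finset.sum_add_distrib,
    Finset.sum_ite_eq' Finset.univ (0 : Fin (m+2))]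
  simp

lemma sqMc (m : ℕ) (g : Fin (m+3) → ℝ) (x z : Fin (m+2) → ℝ) :
    ∑ j, (Mc m g z j * Real.exp (-(x j)))^2
    = (∑ i : Fin (m+1), (g i.succ.castSucc * Real.exp (z i.succ) * Real.exp (-(x i.castSucc)))^2)
      + (g (Fin.last (m+2)) * Real.exp (-(z (Fin.last (m+1)))) * Real.exp (-(x (Fin.last (m+1)))))^2 := by
  rw [Fin.sum_univ_castSucc (f := fun j => (Mc m g z j * Real.exp (-(x j)))^2)]
  simp only [Mc, Fin.lastCases_castSucc, Fin.lastCases_last, mul_assoc]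

lemma sqPd (m : ℕ) (g : Fin (m+3) → ℝ) (x z : Fin (m+2) → ℝ) :
    ∑ j, (Pd m g x j * Real.exp (z j))^2
    = (∑ i : Fin (m+1), (g i.succ.castSucc * Real.exp (z i.succ) * Real.exp (-(x i.castSucc)))^2)
      + (g 0 * Real.exp (x 0) * Real.exp (z 0))^2 := by
  rw [Fin.sum_univ_succ (f := fun j => (Pd m g x j * Real.exp (z j))^2)]
  simp only [Pd, Fin.cases_zero, Fin.cases_succ]
  rw [add_comm]
  congr 1
  refine Finset.sum_congr rfl (fun i _ => ?_)
  ring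

lemma sqMd (m : ℕ) (g : Fin (m+3) → ℝ) (x z : Fin (m+2) → ℝ) :
    ∑ j, (Md m g x j * Real.exp (-(z j)))^2
    = (∑ j, (Real.exp (-(z j)) * Real.exp (x j))^2)
      + (2 * g (Fin.last (m+2)) * Real.exp (-(2 * z (Fin.last (m+1))))
        + (g (Fin.last (m+2)) * Real.exp (-(z (Fin.last (m+1)))) * Real.exp (-(x (Fin.last (m+1)))))^2) := by
  have step : ∀ j : Fin (m+2), (Md m g x j * Real.exp (-(z j)))^2
      = (Real.exp (-(z j)) * Real.exp (x j))^2
        + (if j = Fin.last (m+1) then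
            2 * g (Fin.last (m+2)) * Real.exp (-(2 * z (Fin.last (m+1))))
              + (g (Fin.last (m+2)) * Real.exp (-(z (Fin.last (m+1)))) * Real.exp (-(x (Fin.last (m+1)))))^2
          else 0) := by
    intro j
    rcases eq_or_ne j (Fin.last (m+1)) with rfl | h
    · simp only [Md, if_pos rfl, ite_true]
      have h1 : Real.exp (x (Fin.last (m+1))) * Real.exp (-(x (Fin.last (m+1)))) = 1 := by
        rw [← Real.exp_add]; simp
      have h2 : Real.exp (-(z (Fin.last (m+1)))) * Real.exp (-(z (Fin.last (m+1))))
          = Real.exp (-(2 * z (Fin.last (m+1)))) := by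
        rw [← Real.exp_add]; ring_nf
      linear_combination (2 * g (Fin.last (m+2)) * Real.exp (-(z (Fin.last (m+1))))
          * Real.exp (-(z (Fin.last (m+1))))) * h1
        + 2 * g (Fin.last (m+2)) * h2
    · simp only [Md, if_neg h, add_zero, ite_false]
      ring
  rw [Finset.sum_congr rfl (fun j _ => step j), Finset.sum_add_distrib,
    Finset.sum_ite_eq' Finset.univ (Fin.last (m+1))]
  simp

lemma expand_sum {k : ℕ} (a b : Fin k → ℝ) :
    ∑ i, ((a i - b i)^2 + (a i + b i))
    = ((∑ i, (a i)^2) + ∑ i, (b i)^2) + (∑ i, (a i + b i)) - 2 * ∑ i, a i * b i := by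
  rw [Finset.mul_sum, ← Finset.sum_add_distrib, ← Finset.sum_add_distrib, ← Finset.sum_sub_distrib]
  exact Finset.sum_congr rfl (fun i _ => by ring)

lemma key (m : ℕ) (g : Fin (m+3) → ℝ) (x z : Fin (m+2) → ℝ) :
    -(1/2) * (∑ i, ((Pc m g z i * Real.exp (x i) - Mc m g z i * Real.exp (-(x i)))^2
        + (Pc m g z i * Real.exp (x i) + Mc m g z i * Real.exp (-(x i)))))
      + (2 * g 0 * Real.exp (2 * x 0)
          + (∑ i : Fin (m + 1), g i.succ.castSucc * Real.exp (x i.succ - x i.castSucc))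
          + g (Fin.last (m + 1)).castSucc * g (Fin.last (m + 2))
              * Real.exp (-x (Fin.last (m + 1)) - x (Fin.last m).castSucc))
    = -(1/2) * (∑ i, ((Pd m g x i * Real.exp (z i) - Md m g x i * Real.exp (-(z i)))^2
        + (Pd m g x i * Real.exp (z i) + Md m g x i * Real.exp (-(z i)))))
      + (g 0 * g 1 * Real.exp (z 0 + z 1)
          + (∑ i : Fin (m + 1), g i.succ.castSucc * Real.exp (z i.succ - z i.castSucc))
          + 2 * g (Fin.last (m + 2)) * Real.exp (-(2 * z (Fin.last (m + 1))))) := by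
  rw [expand_sum (fun i => Pc m g z i * Real.exp (x i)) (fun i => Mc m g z i * Real.exp (-(x i))),
      expand_sum (fun i => Pd m g x i * Real.exp (z i)) (fun i => Md m g x i * Real.exp (-(z i)))]
  rw [← Sx_eq_x, ← Sx_eq_z]
  rw [crossX, crossZ, sqPc, sqMc, sqPd, sqMd]
  ring

end Aux

/-- The kernel `Q` intertwines the two quadratic Hamiltonians of the twisted
affine `A^{(2)}_{2n−1}` closed Toda chain with different coupling constants,
`n = m + 2 ≥ 2`. -/
theorem A2odd_A2odd_intertwining (m : ℕ) (g : Fin (m + 3) → ℝ)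
    (x z : Fin (m + 2) → ℝ) :
    -(1/2) * (∑ i : Fin (m + 2), pd2 (fun u => Qker m g u z) i x)
      + (2 * g 0 * Real.exp (2 * x 0)
          + (∑ i : Fin (m + 1), g i.succ.castSucc * Real.exp (x i.succ - x i.castSucc))
          + g (Fin.last (m + 1)).castSucc * g (Fin.last (m + 2))
              * Real.exp (-x (Fin.last (m + 1)) - x (Fin.last m).castSucc)) * Qker m g x z
    = -(1/2) * (∑ i : Fin (m + 2), pd2 (fun v => Qker m g x v) i z)
      + (g 0 * g 1 * Real.exp (z 0 + z 1)
          + (∑ i : Fin (m + 1), g i.succ.castSucc * Real.exp (z i.succ - z i.castSucc))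
          + 2 * g (Fin.last (m + 2))
              * Real.exp (-(2 * z (Fin.last (m + 1))))) * Qker m g x z := by
  have hQx : (fun u => Qker m g u z)
      = fun u => Real.exp (∑ j, (Pc m g z j * Real.exp (u j) + Mc m g z j * Real.exp (-(u j)))) := by
    funext u
    show Real.exp (Sx m g u z) = _
    rw [Sx_eq_x]
  have hQz : (fun v => Qker m g x v)
      = fun v => Real.exp (∑ j, (Pd m g x j * Real.exp (v j) + Md m g x j * Real.exp (-(v j)))) := by
    funext v
    show Real.exp (Sx m g x v) = _
    rw [Sx_eq_z]
  have hQ : Qker m g x z = Real.exp (Sx m g x z) := rfl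
  rw [hQx, hQz, hQ]
  have hsum1 : ∑ i : Fin (m+2),
      pd2 (fun u => Real.exp (∑ j, (Pc m g z j * Real.exp (u j) + Mc m g z j * Real.exp (-(u j))))) i x
      = Real.exp (Sx m g x z) * ∑ i, ((Pc m g z i * Real.exp (x i) - Mc m g z i * Real.exp (-(x i)))^2
          + (Pc m g z i * Real.exp (x i) + Mc m g z i * Real.exp (-(x i)))) := by
    rw [Finset.sum_congr rfl (fun i _ => pd2_exp_sum (Pc m g z) (Mc m g z) i x),
      ← Finset.mul_sum, ← Sx_eq_x]
  have hsum2 : ∑ i : Fin (m+2),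
      pd2 (fun v => Real.exp (∑ j, (Pd m g x j * Real.exp (v j) + Md m g x j * Real.exp (-(v j))))) i z
      = Real.exp (Sx m g x z) * ∑ i, ((Pd m g x i * Real.exp (z i) - Md m g x i * Real.exp (-(z i)))^2
          + (Pd m g x i * Real.exp (z i) + Md m g x i * Real.exp (-(z i)))) := by
    rw [Finset.sum_congr rfl (fun i _ => pd2_exp_sum (Pd m g x) (Md m g x) i z),
      ← Finset.mul_sum, ← Sx_eq_z]
  rw [hsum1, hsum2]
  linear_combination Real.exp (Sx m g x z) * key m g x z
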